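/- Let f, g ∈ ℝ[z₁,…,zₙ]. Every non-zero polynomial in the real span {αf + βg : α, β ∈ ℝ} is stable if and only if either f = g ≡ 0, or f ≪ g, or g ≪ f. Moreover, if g ≪ f then Wⱼ[g,f](x) ≤ 0 for all x ∈ ℝⁿ and all 1 ≤ j ≤ n, and if f ≪ g then Wⱼ[g,f](x) ≥ 0 for all x ∈ ℝⁿ and all 1 ≤ j ≤ n. -/

import Mathlib

open MvPolynomial

/-- A complex polynomial is *stable* if it is non-vanishing whenever all
variables lie in the open upper half-plane. -/
def IsStable {σ : Type*} (f : MvPolynomial σ ℂ) : Prop :=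
  ∀ z : σ → ℂ, (∀ i, 0 < (z i).im) → MvPolynomial.eval z f ≠ 0

/-- A real polynomial is *real stable* if it is non-vanishing whenever all
variables lie in the open upper half-plane. -/
def IsRealStable {σ : Type*} (f : MvPolynomial σ ℝ) : Prop :=
  ∀ z : σ → ℂ, (∀ i, 0 < (z i).im) → MvPolynomial.aeval z f ≠ 0

/-- `ProperPosition f g` means `f ≪ g`, i.e. `g + i·f` is stable. -/
def ProperPosition {σ : Type*} (f g : MvPolynomial σ ℝ) : Prop :=
  IsStable (MvPolynomial.map (algebraMap ℝ ℂ) g +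
    Complex.I • MvPolynomial.map (algebraMap ℝ ℂ) f)

/-- The `j`-th Wronskian `W_j[g,f] = (∂g/∂z_j)·f − g·(∂f/∂z_j)`. -/
noncomputable def wronskian' {σ : Type*} (j : σ) (g f : MvPolynomial σ ℝ) :
    MvPolynomial σ ℝ :=
  pderiv j g * f - g * pderiv j f

section Auxiliary

open Polynomial Set
open scoped MvPolynomial

variable {n : ℕ}

lemma analyticOnNhd_eval (P : MvPolynomial (Fin n) ℂ) :
    AnalyticOnNhd ℂ (fun z : Fin n → ℂ => eval z P) univ := by
  induction P using MvPolynomial.induction_on with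
  | C c =>
    have : AnalyticOnNhd ℂ (fun _ : Fin n → ℂ => c) univ := analyticOnNhd_const
    simpa using this
  | add p q hp hq =>
    have := hp.add hq
    simpa [Pi.add_def] using this
  | mul_X p i hp =>
    have hX : AnalyticOnNhd ℂ (fun z : Fin n → ℂ => z i) univ :=
      (ContinuousLinearMap.proj (R := ℂ) (φ := fun _ : Fin n => ℂ) i).analyticOnNhd univ
    have := hp.mul hX
    simpa using this

def UHP (n : ℕ) : Set (Fin n → ℂ) := {z | ∀ i, 0 < (z i).im}

lemma isOpen_UHP : IsOpen (UHP n) := by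
  have h : UHP n = Set.pi univ (fun _ : Fin n => Complex.im ⁻¹' Ioi 0) := by
    ext z; simp [UHP]
  rw [h]
  exact isOpen_set_pi finite_univ fun i _ => (isOpen_Ioi).preimage Complex.continuous_im

lemma convex_UHP : Convex ℝ (UHP n) := by
  intro z hz w hw a b ha hb hab
  intro i
  simp only [Pi.add_apply, Pi.smul_apply, Complex.add_im, Complex.smul_im]
  rcases eq_or_lt_of_le ha with h | h
  · have hb1 : b = 1 := by linarith
    simp [← h, hb1]
    exact hw i
  · have h1 : (0:ℝ) < a * (z i).im := mul_pos h (hz i)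
    have h2 : (0:ℝ) ≤ b * (w i).im := mul_nonneg hb (le_of_lt (hw i))
    simp only [smul_eq_mul]
    linarith

lemma preconnected_UHP : IsPreconnected (UHP n) := convex_UHP.isPreconnected

lemma UHP_nonempty : (UHP n).Nonempty := ⟨fun _ => Complex.I, fun _ => by simp [UHP]⟩

private lemma norm_sub_conj_le {w r : ℂ} (hw : 0 < w.im) (hr : r.im ≤ 0) :
    ‖w - (starRingEnd ℂ) r‖ ≤ ‖w - r‖ := by
  rw [← Real.sqrt_sq (norm_nonneg (w - (starRingEnd ℂ) r)),
      ← Real.sqrt_sq (norm_nonneg (w - r))]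
  apply Real.sqrt_le_sqrt
  rw [Complex.sq_norm, Complex.sq_norm]
  simp only [Complex.normSq_apply, Complex.sub_re, Complex.sub_im, Complex.conj_re,
    Complex.conj_im]
  nlinarith [mul_nonpos_of_nonneg_of_nonpos (le_of_lt hw) hr]

private lemma KL_aux : ∀ (N : ℕ) (s : Polynomial ℂ), s.natDegree ≤ N →
    (∀ w : ℂ, 0 < w.im → s.eval w ≠ 0) →
    ∀ w : ℂ, 0 < w.im → ‖(s.map (starRingEnd ℂ)).eval w‖ ≤ ‖s.eval w‖ := by
  intro N
  induction N with
  | zero =>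
    intro s hdeg _ w _
    obtain ⟨c, rfl⟩ := Polynomial.natDegree_eq_zero.mp (Nat.le_zero.mp hdeg)
    simp
  | succ N ih =>
    intro s hdeg hst w hw
    rcases Nat.lt_or_ge s.natDegree (N+1) with h | h
    · exact ih s (Nat.lt_succ_iff.mp h) hst w hw
    have hdeg' : s.natDegree = N + 1 := le_antisymm hdeg h
    have hs0 : s ≠ 0 := by
      intro h0
      exact hst Complex.I (by simp) (by simp [h0])
    obtain ⟨r, hr⟩ := Complex.exists_root (f := s) (by
      rw [← Polynomial.natDegree_pos_iff_degree_pos, hdeg']; omega)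
    have hrim : r.im ≤ 0 := by
      by_contra hc
      exact hst r (lt_of_not_ge hc) hr
    obtain ⟨u, hu⟩ := (Polynomial.dvd_iff_isRoot.mpr hr)
    have hu0 : u ≠ 0 := by
      intro h0; rw [h0, mul_zero] at hu; exact hs0 hu
    have hudeg : u.natDegree ≤ N := by
      have hx : (Polynomial.X - Polynomial.C r) ≠ 0 := Polynomial.X_sub_C_ne_zero r
      have := Polynomial.natDegree_mul hx hu0
      rw [← hu, Polynomial.natDegree_X_sub_C] at this
      omega
    have hust : ∀ v : ℂ, 0 < v.im → u.eval v ≠ 0 := by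
      intro v hv hv0
      exact hst v hv (by rw [hu]; simp [hv0])
    have ihu := ih u hudeg hust w hw
    rw [hu]
    simp only [Polynomial.map_mul, Polynomial.map_sub, Polynomial.map_X, Polynomial.map_C,
      Polynomial.eval_mul, Polynomial.eval_sub, Polynomial.eval_X, Polynomial.eval_C, norm_mul]
    exact mul_le_mul (norm_sub_conj_le hw hrim) ihu (norm_nonneg _) (norm_nonneg _)

private lemma U1_aux : ∀ (N : ℕ) (s : Polynomial ℂ), s.natDegree ≤ N →
    (∀ w : ℂ, 0 < w.im → s.eval w ≠ 0) →
    ∀ τ : ℂ, τ.im = 0 → ((s.derivative.eval τ) * (starRingEnd ℂ) (s.eval τ)).im ≤ 0 := by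
  intro N
  induction N with
  | zero =>
    intro s hdeg _ τ _
    obtain ⟨c, rfl⟩ := Polynomial.natDegree_eq_zero.mp (Nat.le_zero.mp hdeg)
    simp
  | succ N ih =>
    intro s hdeg hst τ hτ
    rcases Nat.lt_or_ge s.natDegree (N+1) with h | h
    · exact ih s (Nat.lt_succ_iff.mp h) hst τ hτ
    have hdeg' : s.natDegree = N + 1 := le_antisymm hdeg h
    have hs0 : s ≠ 0 := by
      intro h0
      exact hst Complex.I (by simp) (by simp [h0])
    obtain ⟨r, hr⟩ := Complex.exists_root (f := s) (by
      rw [← Polynomial.natDegree_pos_iff_degree_pos, hdeg']; omega)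
    have hrim : r.im ≤ 0 := by
      by_contra hc
      exact hst r (lt_of_not_ge hc) hr
    obtain ⟨u, hu⟩ := (Polynomial.dvd_iff_isRoot.mpr hr)
    have hu0 : u ≠ 0 := by
      intro h0; rw [h0, mul_zero] at hu; exact hs0 hu
    have hudeg : u.natDegree ≤ N := by
      have hx : (Polynomial.X - Polynomial.C r) ≠ 0 := Polynomial.X_sub_C_ne_zero r
      have := Polynomial.natDegree_mul hx hu0
      rw [← hu, Polynomial.natDegree_X_sub_C] at this
      omega
    have hust : ∀ v : ℂ, 0 < v.im → u.eval v ≠ 0 := by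
      intro v hv hv0
      exact hst v hv (by rw [hu]; simp [hv0])
    have ihu := ih u hudeg hust τ hτ
    set A := u.eval τ with hA
    set B := u.derivative.eval τ with hB
    set c := τ - r with hc
    have hds : s.derivative.eval τ = A + c * B := by
      rw [hu, Polynomial.derivative_mul, Polynomial.derivative_X_sub_C]
      simp [hA, hB, hc]
    have hes : s.eval τ = c * A := by rw [hu]; simp [hA, hc]
    rw [hds, hes]
    have h1 : A * (starRingEnd ℂ) A = (Complex.normSq A : ℂ) := Complex.mul_conj A
    have h2 : c * (starRingEnd ℂ) c = (Complex.normSq c : ℂ) := Complex.mul_conj c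
    have e1 : (A + c * B) * (starRingEnd ℂ) (c * A) =
        ((Complex.normSq A : ℝ) : ℂ) * (starRingEnd ℂ) c +
        ((Complex.normSq c : ℝ) : ℂ) * (B * (starRingEnd ℂ) A) := by
      rw [map_mul]
      linear_combination (starRingEnd ℂ) c * h1 + (B * (starRingEnd ℂ) A) * h2
    rw [e1]
    have him : (((Complex.normSq A : ℝ) : ℂ) * (starRingEnd ℂ) c +
        ((Complex.normSq c : ℝ) : ℂ) * (B * (starRingEnd ℂ) A)).im =
        Complex.normSq A * r.im + Complex.normSq c * (B * (starRingEnd ℂ) A).im := by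
      simp [Complex.add_im, Complex.conj_im, hc, Complex.sub_im, hτ]
    rw [him]
    have t1 : Complex.normSq A * r.im ≤ 0 :=
      mul_nonpos_of_nonneg_of_nonpos (Complex.normSq_nonneg A) hrim
    have t2 : Complex.normSq c * (B * (starRingEnd ℂ) A).im ≤ 0 :=
      mul_nonpos_of_nonneg_of_nonpos (Complex.normSq_nonneg c) ihu
    linarith

-- eval of polynomial-valued substitution
lemma eval_aeval' (u : Fin n → Polynomial ℂ) (S : MvPolynomial (Fin n) ℂ) (t : ℂ) :
    Polynomial.eval t (MvPolynomial.aeval u S) =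
      MvPolynomial.eval (fun k => Polynomial.eval t (u k)) S := by
  induction S using MvPolynomial.induction_on with
  | C c => simp [MvPolynomial.aeval_C]
  | add p q hp hq => simp [hp, hq]
  | mul_X p i hp => simp [hp]

-- real-point evaluation of mapped polynomial
lemma eval_map_real (P : MvPolynomial (Fin n) ℝ) (x : Fin n → ℝ) :
    MvPolynomial.eval (fun k => ((x k : ℝ) : ℂ)) (MvPolynomial.map (algebraMap ℝ ℂ) P) =
      ((MvPolynomial.eval x P : ℝ) : ℂ) := by
  induction P using MvPolynomial.induction_on with
  | C c => simp
  | add p q hp hq => simp [hp, hq]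
  | mul_X p i hp => simp [hp]

-- aeval = eval of map
lemma aeval_eq_eval_map (z : Fin n → ℂ) (P : MvPolynomial (Fin n) ℝ) :
    MvPolynomial.aeval z P = MvPolynomial.eval z (MvPolynomial.map (algebraMap ℝ ℂ) P) := by
  rw [MvPolynomial.aeval_def, MvPolynomial.eval₂_eq_eval_map]

-- conj of map
lemma conj_map (P : MvPolynomial (Fin n) ℝ) :
    MvPolynomial.map (starRingEnd ℂ) (MvPolynomial.map (algebraMap ℝ ℂ) P) =
      MvPolynomial.map (algebraMap ℝ ℂ) P := by
  rw [MvPolynomial.map_map]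
  have : (starRingEnd ℂ).comp (algebraMap ℝ ℂ) = algebraMap ℝ ℂ := by
    ext r; simp
  rw [this]

-- pderiv commutes with map
example (P : MvPolynomial (Fin n) ℝ) (j : Fin n) :
    pderiv j (MvPolynomial.map (algebraMap ℝ ℂ) P) =
    MvPolynomial.map (algebraMap ℝ ℂ) (pderiv j P) := MvPolynomial.pderiv_map

lemma derivative_aeval_ite (j : Fin n) (c : Fin n → ℂ) (S : MvPolynomial (Fin n) ℂ) :
    Polynomial.derivative (MvPolynomial.aeval
        (fun k => if k = j then Polynomial.X else Polynomial.C (c k)) S) =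
      MvPolynomial.aeval (fun k => if k = j then Polynomial.X else Polynomial.C (c k))
        (pderiv j S) := by
  induction S using MvPolynomial.induction_on with
  | C a => simp [MvPolynomial.aeval_C]
  | add p q hp hq => simp [map_add, hp, hq]
  | mul_X p i hp =>
    rw [map_mul, Polynomial.derivative_mul, hp]
    rw [pderiv_mul, MvPolynomial.pderiv_X]
    rcases eq_or_ne i j with h | h
    · subst h
      simp
    · simp [if_neg h, Pi.single_eq_of_ne h]

lemma conj_aeval_line (x y : Fin n → ℝ) (S : MvPolynomial (Fin n) ℂ) :
    MvPolynomial.aeval (fun k => Polynomial.C ((x k : ℝ) : ℂ) +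
        Polynomial.C ((y k : ℝ) : ℂ) * Polynomial.X)
      (MvPolynomial.map (starRingEnd ℂ) S) =
    Polynomial.map (starRingEnd ℂ) (MvPolynomial.aeval (fun k => Polynomial.C ((x k : ℝ) : ℂ) +
        Polynomial.C ((y k : ℝ) : ℂ) * Polynomial.X) S) := by
  induction S using MvPolynomial.induction_on with
  | C a => simp [MvPolynomial.aeval_C]
  | add p q hp hq => simp [map_add, Polynomial.map_add, hp, hq]
  | mul_X p i hp =>
    simp only [map_mul, Polynomial.map_mul, hp, MvPolynomial.map_X, MvPolynomial.aeval_X]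
    congr 1
    simp [Polynomial.map_add, Polynomial.map_mul, Complex.conj_ofReal]

-- value of the stable combination S = g + I f at a point
lemma eval_S (f g : MvPolynomial (Fin n) ℝ) (z : Fin n → ℂ) :
    MvPolynomial.eval z (MvPolynomial.map (algebraMap ℝ ℂ) g +
        Complex.I • MvPolynomial.map (algebraMap ℝ ℂ) f) =
      MvPolynomial.aeval z g + Complex.I * MvPolynomial.aeval z f := by
  rw [map_add, MvPolynomial.smul_eq_C_mul, map_mul, MvPolynomial.eval_C,
    aeval_eq_eval_map, aeval_eq_eval_map]

lemma conj_S (f g : MvPolynomial (Fin n) ℝ) :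
    MvPolynomial.map (starRingEnd ℂ) (MvPolynomial.map (algebraMap ℝ ℂ) g +
        Complex.I • MvPolynomial.map (algebraMap ℝ ℂ) f) =
      MvPolynomial.map (algebraMap ℝ ℂ) g +
        (-Complex.I) • MvPolynomial.map (algebraMap ℝ ℂ) f := by
  rw [map_add, conj_map, MvPolynomial.smul_eq_C_mul, MvPolynomial.smul_eq_C_mul, map_mul,
    conj_map, MvPolynomial.map_C]
  simp [Complex.conj_I]

lemma eval_conj_S (f g : MvPolynomial (Fin n) ℝ) (z : Fin n → ℂ) :
    MvPolynomial.eval z (MvPolynomial.map (starRingEnd ℂ)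
        (MvPolynomial.map (algebraMap ℝ ℂ) g +
          Complex.I • MvPolynomial.map (algebraMap ℝ ℂ) f)) =
      MvPolynomial.aeval z g - Complex.I * MvPolynomial.aeval z f := by
  rw [conj_S, map_add, MvPolynomial.smul_eq_C_mul, map_mul, MvPolynomial.eval_C,
    aeval_eq_eval_map, aeval_eq_eval_map]
  ring

/-- Multivariate Key Lemma: if `S` is stable then `‖S*(z)‖ ≤ ‖S(z)‖` on the
upper half polyplane. -/
lemma KL_mv (S : MvPolynomial (Fin n) ℂ) (hS : ∀ z ∈ UHP n, MvPolynomial.eval z S ≠ 0)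
    (z : Fin n → ℂ) (hz : z ∈ UHP n) :
    ‖MvPolynomial.eval z (MvPolynomial.map (starRingEnd ℂ) S)‖ ≤
      ‖MvPolynomial.eval z S‖ := by
  set x : Fin n → ℝ := fun k => (z k).re with hx
  set y : Fin n → ℝ := fun k => (z k).im with hy
  set u : Fin n → Polynomial ℂ := fun k => Polynomial.C ((x k : ℝ) : ℂ) +
      Polynomial.C ((y k : ℝ) : ℂ) * Polynomial.X with hu
  set q : Polynomial ℂ := MvPolynomial.aeval u S with hq
  have hpt : ∀ t : ℂ, 0 < t.im → (fun k => Polynomial.eval t (u k)) ∈ UHP n := by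
    intro t ht k
    simp only [hu, Polynomial.eval_add, Polynomial.eval_mul, Polynomial.eval_C,
      Polynomial.eval_X]
    have : ((x k : ℂ) + (y k : ℂ) * t).im = y k * t.im := by
      simp [Complex.add_im, Complex.mul_im]
    rw [this]
    exact mul_pos (hz k) ht
  have hqst : ∀ t : ℂ, 0 < t.im → q.eval t ≠ 0 := by
    intro t ht
    rw [hq, eval_aeval']
    exact hS _ (hpt t ht)
  have hKL := KL_aux q.natDegree q le_rfl hqst Complex.I (by simp)
  have hptI : (fun k => Polynomial.eval Complex.I (u k)) = z := by
    funext k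
    simp only [hu, Polynomial.eval_add, Polynomial.eval_mul, Polynomial.eval_C,
      Polynomial.eval_X, hx, hy]
    exact Complex.re_add_im (z k)
  have hqI : q.eval Complex.I = MvPolynomial.eval z S := by
    rw [hq, eval_aeval', hptI]
  have hqcI : (q.map (starRingEnd ℂ)).eval Complex.I =
      MvPolynomial.eval z (MvPolynomial.map (starRingEnd ℂ) S) := by
    rw [hq, ← conj_aeval_line, eval_aeval']
    rw [show (fun k => Polynomial.eval Complex.I (Polynomial.C ((x k : ℝ):ℂ) +
      Polynomial.C ((y k : ℝ):ℂ) * Polynomial.X)) = z from hptI]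
  rwa [hqI, hqcI] at hKL

lemma continuous_eval' (P : MvPolynomial (Fin n) ℂ) :
    Continuous (fun z : Fin n → ℂ => MvPolynomial.eval z P) := by
  rw [← continuousOn_univ]
  exact (analyticOnNhd_eval P).continuousOn

lemma eval_zero_on_UHP (P : MvPolynomial (Fin n) ℂ)
    (h : ∀ z ∈ UHP n, MvPolynomial.eval z P = 0) : P = 0 := by
  obtain ⟨z₀, hz₀⟩ := UHP_nonempty (n := n)
  have hev : (fun z : Fin n → ℂ => MvPolynomial.eval z P) =ᶠ[nhds z₀] 0 := by
    filter_upwards [isOpen_UHP.mem_nhds hz₀] with z hz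
    exact h z hz
  have h0 : Set.EqOn (fun z : Fin n → ℂ => MvPolynomial.eval z P) 0 Set.univ :=
    (analyticOnNhd_eval P).eqOn_zero_of_preconnected_of_eventuallyEq_zero
      isPreconnected_univ (Set.mem_univ z₀) hev
  apply MvPolynomial.funext
  intro x
  simpa using h0 (Set.mem_univ x)

lemma stable_combo (f g : MvPolynomial (Fin n) ℝ) (hp : ProperPosition f g) :
    ∀ a b : ℝ, a • f + b • g ≠ 0 → IsRealStable (a • f + b • g) := by
  intro a b hne z hzim
  set S : MvPolynomial (Fin n) ℂ := MvPolynomial.map (algebraMap ℝ ℂ) g +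
      Complex.I • MvPolynomial.map (algebraMap ℝ ℂ) f with hSdef
  set Sc : MvPolynomial (Fin n) ℂ := MvPolynomial.map (starRingEnd ℂ) S with hScdef
  have hS : ∀ w ∈ UHP n, MvPolynomial.eval w S ≠ 0 := fun w hw => hp w hw
  have hz : z ∈ UHP n := hzim
  obtain ⟨lam, hlam⟩ : ∃ l : ℂ, l = ((b : ℂ) - (a : ℂ) * Complex.I) / 2 := ⟨_, rfl⟩
  have hconj : (starRingEnd ℂ) lam = ((b : ℂ) + (a : ℂ) * Complex.I) / 2 := by
    have h2 : (starRingEnd ℂ) 2 = 2 := map_ofNat _ 2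
    rw [hlam, map_div₀, map_sub, map_mul, Complex.conj_ofReal, Complex.conj_ofReal,
      Complex.conj_I, h2]
    ring
  have hlam0 : lam ≠ 0 := by
    intro h0
    rw [hlam] at h0
    have h1 : (b : ℂ) - (a : ℂ) * Complex.I = 0 := by
      field_simp at h0
      simpa using h0
    have ha : a = 0 := by
      have := congrArg Complex.im h1
      simpa using this
    have hb : b = 0 := by
      have := congrArg Complex.re h1
      simpa using this
    apply hne
    rw [ha, hb]
    simp
  have hv : ∀ w : Fin n → ℂ, MvPolynomial.aeval w (a • f + b • g) =
      lam * MvPolynomial.eval w S + (starRingEnd ℂ) lam * MvPolynomial.eval w Sc := by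
    intro w
    rw [hScdef, eval_conj_S, hSdef, eval_S, hconj, hlam]
    rw [map_add, map_smul, map_smul]
    rw [Algebra.smul_def, Algebra.smul_def, Complex.coe_algebraMap]
    linear_combination ((a : ℂ) * MvPolynomial.aeval w f) * Complex.I_sq
  intro h0
  have hlin : lam * MvPolynomial.eval z S = -((starRingEnd ℂ) lam * MvPolynomial.eval z Sc) := by
    have := hv z
    rw [h0] at this
    linear_combination -this
  have hSz : MvPolynomial.eval z S ≠ 0 := hS z hz
  have hnormEq : ‖MvPolynomial.eval z Sc‖ = ‖MvPolynomial.eval z S‖ := by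
    have h1 : ‖lam‖ * ‖MvPolynomial.eval z S‖ = ‖lam‖ * ‖MvPolynomial.eval z Sc‖ := by
      have := congrArg norm hlin
      rwa [norm_mul, norm_neg, norm_mul, RCLike.norm_conj] at this
    have := mul_left_cancel₀ (norm_ne_zero_iff.mpr hlam0) h1
    exact this.symm
  -- the quotient S*/S is analytic on the UHP, with modulus ≤ 1, equal to 1 at z
  set w : (Fin n → ℂ) → ℂ := fun w' => MvPolynomial.eval w' Sc / MvPolynomial.eval w' S
    with hwdef
  have hwan : AnalyticOnNhd ℂ w (UHP n) := by
    apply AnalyticOnNhd.div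
    · exact (analyticOnNhd_eval Sc).mono (Set.subset_univ _)
    · exact (analyticOnNhd_eval S).mono (Set.subset_univ _)
    · exact fun w' hw' => hS w' hw'
  have hwle : ∀ w' ∈ UHP n, ‖w w'‖ ≤ 1 := by
    intro w' hw'
    rw [hwdef]
    simp only [norm_div]
    rw [div_le_one (norm_pos_iff.mpr (hS w' hw'))]
    exact KL_mv S hS w' hw'
  have hwz : ‖w z‖ = 1 := by
    rw [hwdef]
    simp only [norm_div]
    rw [hnormEq, div_self (norm_ne_zero_iff.mpr hSz)]
  have hmax : IsMaxOn (norm ∘ w) (UHP n) z := by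
    intro w' hw'
    simp only [Function.comp_apply, Set.mem_setOf_eq, hwz]
    exact hwle w' hw'
  have hEqOn : Set.EqOn w (Function.const _ (w z)) (UHP n) :=
    Complex.eqOn_of_isPreconnected_of_isMaxOn_norm preconnected_UHP isOpen_UHP
      hwan.differentiableOn hz hmax
  have hkap : ∀ w' ∈ UHP n, MvPolynomial.eval w' Sc = w z * MvPolynomial.eval w' S := by
    intro w' hw'
    have h1 : w w' = w z := hEqOn hw'
    rw [hwdef] at h1
    simp only at h1
    exact (div_eq_iff (hS w' hw')).mp h1
  have hcoeff : lam + (starRingEnd ℂ) lam * w z = 0 := by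
    have h1 := hkap z hz
    have h2 : (lam + (starRingEnd ℂ) lam * w z) * MvPolynomial.eval z S = 0 := by
      linear_combination hlin - (starRingEnd ℂ) lam * h1
    rcases mul_eq_zero.mp h2 with h | h
    · exact h
    · exact absurd h hSz
  have hall : ∀ w' ∈ UHP n, MvPolynomial.aeval w' (a • f + b • g) = 0 := by
    intro w' hw'
    rw [hv w', hkap w' hw']
    linear_combination MvPolynomial.eval w' S * hcoeff
  have hmap0 : MvPolynomial.map (algebraMap ℝ ℂ) (a • f + b • g) = 0 := by
    apply eval_zero_on_UHP
    intro w' hw'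
    rw [← aeval_eq_eval_map]
    exact hall w' hw'
  have : (a • f + b • g : MvPolynomial (Fin n) ℝ) = 0 := by
    apply MvPolynomial.map_injective (algebraMap ℝ ℂ)
      (fun x y hxy => by exact_mod_cast hxy)
    simpa using hmap0
  exact hne this

lemma isRealStable_iff_proper_zero (f g : MvPolynomial (Fin n) ℝ) (hg : IsRealStable g) :
    ProperPosition (0 : MvPolynomial (Fin n) ℝ) g := by
  intro z hz
  rw [eval_S]
  simpa using hg z hz

lemma forward_dir (f g : MvPolynomial (Fin n) ℝ)
    (H : ∀ a b : ℝ, a • f + b • g ≠ 0 → IsRealStable (a • f + b • g)) :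
    (f = 0 ∧ g = 0) ∨ ProperPosition f g ∨ ProperPosition g f := by
  by_cases hf : f = 0
  · by_cases hg : g = 0
    · exact Or.inl ⟨hf, hg⟩
    · refine Or.inr (Or.inl ?_)
      have hgs : IsRealStable g := by
        have e : (0:ℝ) • f + (1:ℝ) • g = g := by simp
        have := H 0 1 (by rw [e]; exact hg)
        rwa [e] at this
      intro z hz
      rw [eval_S, hf]
      simpa using hgs z hz
  · have hfs : IsRealStable f := by
      have e : (1:ℝ) • f + (0:ℝ) • g = f := by simp
      have := H 1 0 (by rw [e]; exact hf)
      rwa [e] at this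
    by_cases hc : ∃ c : ℝ, g = c • f
    · obtain ⟨c, hcf⟩ := hc
      refine Or.inr (Or.inl ?_)
      intro z hz
      rw [eval_S, hcf]
      have : MvPolynomial.aeval z (c • f) = (c : ℂ) * MvPolynomial.aeval z f := by
        rw [map_smul, Algebra.smul_def, Complex.coe_algebraMap]
      rw [this]
      intro h0
      have hF : MvPolynomial.aeval z f ≠ 0 := hfs z hz
      have hfac : ((c : ℂ) + Complex.I) * MvPolynomial.aeval z f = 0 := by
        linear_combination h0
      rcases mul_eq_zero.mp hfac with h | h
      · have h2 := congrArg Complex.im h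
        simp only [Complex.add_im, Complex.ofReal_im, Complex.I_im, Complex.zero_im,
          zero_add] at h2
        exact one_ne_zero h2
      · exact hF h
    · -- the generic case : φ = G/F avoids ℝ on the UHP
      set u : (Fin n → ℂ) → ℝ := fun z =>
        ((MvPolynomial.aeval z g) / (MvPolynomial.aeval z f)).im with hu
      have hFne : ∀ z ∈ UHP n, MvPolynomial.aeval z f ≠ 0 := fun z hz => hfs z hz
      have haeval : ∀ P : MvPolynomial (Fin n) ℝ,
          Continuous (fun z : Fin n → ℂ => MvPolynomial.aeval z P) := by
        intro P
        have e : (fun z : Fin n → ℂ => MvPolynomial.aeval z P) =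
            fun z => MvPolynomial.eval z (MvPolynomial.map (algebraMap ℝ ℂ) P) :=
          funext fun z => aeval_eq_eval_map z P
        rw [e]
        exact continuous_eval' _
      have hcont : ContinuousOn u (UHP n) := by
        apply Complex.continuous_im.comp_continuousOn
        exact ContinuousOn.div (haeval g).continuousOn (haeval f).continuousOn hFne
      have hne0 : ∀ z ∈ UHP n, u z ≠ 0 := by
        intro z hz h0
        set c : ℝ := ((MvPolynomial.aeval z g) / (MvPolynomial.aeval z f)).re with hcdef
        have hquot : (MvPolynomial.aeval z g) / (MvPolynomial.aeval z f) = (c : ℂ) := by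
          apply Complex.ext
          · simp [hcdef]
          · simpa using h0
        have hGc : MvPolynomial.aeval z g = (c : ℂ) * MvPolynomial.aeval z f := by
          rw [← hquot, div_mul_cancel₀]
          exact hFne z hz
        have hPne : (-c) • f + (1:ℝ) • g ≠ 0 := by
          intro hP
          apply hc
          refine ⟨c, ?_⟩
          have : g = c • f := by
            have := congrArg (fun P => P + c • f) hP
            simpa [add_comm, add_assoc, add_left_comm] using this
          exact this
        have := H (-c) 1 hPne z hz
        apply this
        rw [map_add, map_smul, map_smul, Complex.real_smul, Complex.real_smul, hGc]
        push_cast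
        ring
      -- dichotomy by preconnectedness
      set A : Set (Fin n → ℂ) := UHP n ∩ u ⁻¹' (Set.Ioi 0) with hA
      set B : Set (Fin n → ℂ) := UHP n ∩ u ⁻¹' (Set.Iio 0) with hB
      have hAopen : IsOpen A := hcont.isOpen_inter_preimage isOpen_UHP isOpen_Ioi
      have hBopen : IsOpen B := hcont.isOpen_inter_preimage isOpen_UHP isOpen_Iio
      have hdisj : Disjoint A B := by
        rw [Set.disjoint_iff]
        rintro z ⟨⟨_, hz1⟩, ⟨_, hz2⟩⟩
        simp only [Set.mem_preimage, Set.mem_Ioi] at hz1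
        simp only [Set.mem_preimage, Set.mem_Iio] at hz2
        exact absurd (lt_trans hz2 hz1) (lt_irrefl _)
      have hcover : UHP n ⊆ A ∪ B := by
        intro z hz
        rcases lt_trichotomy (u z) 0 with h | h | h
        · exact Or.inr ⟨hz, h⟩
        · exact absurd h (hne0 z hz)
        · exact Or.inl ⟨hz, h⟩
      rcases IsPreconnected.subset_or_subset hAopen hBopen hdisj hcover preconnected_UHP
        with hsub | hsub
      · refine Or.inr (Or.inl ?_)
        intro z hz
        rw [eval_S]
        intro h0
        have hF := hFne z hz
        have hG : MvPolynomial.aeval z g = -Complex.I * MvPolynomial.aeval z f := by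
          linear_combination h0
        have : u z = -1 := by
          rw [hu]
          simp only [hG]
          rw [mul_div_assoc, div_self hF]
          simp
        have hmem := (hsub hz).2
        simp only [Set.mem_preimage, Set.mem_Ioi] at hmem
        rw [this] at hmem
        linarith
      · refine Or.inr (Or.inr ?_)
        intro z hz
        rw [eval_S]
        intro h0
        have hF := hFne z hz
        have hG : MvPolynomial.aeval z g = Complex.I * MvPolynomial.aeval z f := by
          linear_combination -Complex.I * h0 + (MvPolynomial.aeval z g) * Complex.I_sq
        have huz : u z = 1 := by
          rw [hu]
          simp only [hG]
          rw [mul_div_assoc, div_self hF]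
          simp
        have := (hsub hz).2
        simp only [Set.mem_preimage, Set.mem_Iio, huz] at this
        linarith

lemma wronskian_nonneg (f g : MvPolynomial (Fin n) ℝ) (hp : ProperPosition f g)
    (x : Fin n → ℝ) (j : Fin n) : 0 ≤ MvPolynomial.eval x (wronskian' j g f) := by
  set S : MvPolynomial (Fin n) ℂ := MvPolynomial.map (algebraMap ℝ ℂ) g +
      Complex.I • MvPolynomial.map (algebraMap ℝ ℂ) f with hSdef
  have hS : ∀ z ∈ UHP n, MvPolynomial.eval z S ≠ 0 := fun z hz => hp z hz
  -- points approaching the real point x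
  set Z : ℝ → (Fin n → ℂ) := fun ε k => if k = j then ((x j : ℝ) : ℂ)
      else ((x k : ℝ) : ℂ) + (ε : ℂ) * Complex.I with hZdef
  set Phi : ℝ → ℝ := fun ε =>
      ((MvPolynomial.eval (Z ε) (pderiv j S)) *
        (starRingEnd ℂ) (MvPolynomial.eval (Z ε) S)).im with hPhidef
  have hPhile : ∀ ε : ℝ, 0 < ε → Phi ε ≤ 0 := by
    intro ε hε
    set uu : Fin n → Polynomial ℂ := fun k => if k = j then Polynomial.X
        else Polynomial.C (((x k : ℝ) : ℂ) + (ε : ℂ) * Complex.I) with huu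
    set s : Polynomial ℂ := MvPolynomial.aeval uu S with hsdef
    have hsst : ∀ t : ℂ, 0 < t.im → s.eval t ≠ 0 := by
      intro t ht
      rw [hsdef, eval_aeval']
      apply hS
      intro k
      by_cases hk : k = j
      · simp only [huu, if_pos hk, Polynomial.eval_X]
        exact ht
      · simp only [huu, if_neg hk, Polynomial.eval_C]
        simp [Complex.add_im]
        exact hε
    have hU1 := U1_aux s.natDegree s le_rfl hsst ((x j : ℝ) : ℂ) (by simp)
    have hpteq : (fun k => Polynomial.eval ((x j : ℝ) : ℂ) (uu k)) = Z ε := by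
      funext k
      by_cases hk : k = j
      · simp [hZdef, huu, hk]
      · simp [hZdef, huu, hk]
    have hder : s.derivative.eval ((x j : ℝ) : ℂ) =
        MvPolynomial.eval (Z ε) (pderiv j S) := by
      rw [hsdef, derivative_aeval_ite, eval_aeval', hpteq]
    have hev : s.eval ((x j : ℝ) : ℂ) = MvPolynomial.eval (Z ε) S := by
      rw [hsdef, eval_aeval', hpteq]
    show ((MvPolynomial.eval (Z ε)) ((pderiv j) S) *
        (starRingEnd ℂ) ((MvPolynomial.eval (Z ε)) S)).im ≤ 0
    rw [← hder, ← hev]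
    exact hU1
  have hZcont : Continuous Z := by
    apply continuous_pi
    intro k
    by_cases hk : k = j
    · simp only [hZdef, if_pos hk]
      exact continuous_const
    · simp only [hZdef, if_neg hk]
      exact continuous_const.add (Complex.continuous_ofReal.mul continuous_const)
  have hPhicont : Continuous Phi := by
    apply Complex.continuous_im.comp
    exact ((continuous_eval' (pderiv j S)).comp hZcont).mul
      (Complex.continuous_conj.comp ((continuous_eval' S).comp hZcont))
  have hlim : Phi 0 ≤ 0 := by
    have ht : Filter.Tendsto Phi (nhdsWithin 0 (Set.Ioi 0)) (nhds (Phi 0)) :=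
      (hPhicont.tendsto 0).mono_left nhdsWithin_le_nhds
    refine le_of_tendsto ht ?_
    filter_upwards [self_mem_nhdsWithin] with ε hε
    exact hPhile ε hε
  -- compute Phi 0 in terms of real evaluations
  have hZ0 : Z 0 = fun k => ((x k : ℝ) : ℂ) := by
    funext k
    by_cases hk : k = j
    · simp [hZdef, hk]
    · simp [hZdef, hk]
  set p : ℝ := MvPolynomial.eval x f with hpdef
  set q : ℝ := MvPolynomial.eval x g with hqdef
  set p₁ : ℝ := MvPolynomial.eval x (pderiv j f) with hp1def
  set q₁ : ℝ := MvPolynomial.eval x (pderiv j g) with hq1def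
  have hpd : pderiv j S = MvPolynomial.map (algebraMap ℝ ℂ) (pderiv j g) +
      Complex.I • MvPolynomial.map (algebraMap ℝ ℂ) (pderiv j f) := by
    rw [hSdef, map_add, Derivation.map_smul, MvPolynomial.pderiv_map, MvPolynomial.pderiv_map]
  have hev1 : MvPolynomial.eval (Z 0) (pderiv j S) = ((q₁ : ℝ) : ℂ) + Complex.I * p₁ := by
    rw [hZ0, hpd, map_add, MvPolynomial.smul_eq_C_mul, map_mul, MvPolynomial.eval_C,
      eval_map_real, eval_map_real]
  have hev2 : MvPolynomial.eval (Z 0) S = ((q : ℝ) : ℂ) + Complex.I * p := by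
    rw [hZ0, hSdef, map_add, MvPolynomial.smul_eq_C_mul, map_mul, MvPolynomial.eval_C,
      eval_map_real, eval_map_real]
  have hPhi0 : Phi 0 = p₁ * q - q₁ * p := by
    show ((MvPolynomial.eval (Z 0)) ((pderiv j) S) *
        (starRingEnd ℂ) ((MvPolynomial.eval (Z 0)) S)).im = p₁ * q - q₁ * p
    rw [hev1, hev2]
    have hconj : (starRingEnd ℂ) (((q : ℝ) : ℂ) + Complex.I * p) =
        ((q : ℝ) : ℂ) - Complex.I * p := by
      rw [map_add, map_mul, Complex.conj_ofReal, Complex.conj_ofReal, Complex.conj_I]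
      ring
    rw [hconj]
    have hprod : (((q₁ : ℝ) : ℂ) + Complex.I * p₁) * (((q : ℝ) : ℂ) - Complex.I * p) =
        (((q₁ * q + p₁ * p : ℝ)) : ℂ) + (((p₁ * q - q₁ * p : ℝ)) : ℂ) * Complex.I := by
      push_cast
      linear_combination (-(p₁ : ℂ) * p) * Complex.I_sq
    rw [hprod]
    simp
  rw [hPhi0] at hlim
  have : MvPolynomial.eval x (wronskian' j g f) = q₁ * p - q * p₁ := by
    rw [wronskian']
    simp only [map_sub, map_mul, hpdef, hqdef, hp1def, hq1def]
  rw [this]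
  linarith

end Auxiliary

/-- Multivariate Hermite–Kakeya–Obreschkoff theorem: all non-zero polynomials
in the real span of `f` and `g` are stable if and only if `f = g = 0`, or
`f ≪ g`, or `g ≪ f`.  Moreover, if `g ≪ f` then `W_j[g,f] ≤ 0` on `ℝⁿ` for all
`j`, and if `f ≪ g` then `W_j[g,f] ≥ 0` on `ℝⁿ` for all `j`. -/
theorem hermite_kakeya_obreschkoff (n : ℕ) (f g : MvPolynomial (Fin n) ℝ) :
    ((∀ a b : ℝ, a • f + b • g ≠ 0 → IsRealStable (a • f + b • g)) ↔
      ((f = 0 ∧ g = 0) ∨ ProperPosition f g ∨ ProperPosition g f)) ∧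
    (ProperPosition g f → ∀ x : Fin n → ℝ, ∀ j : Fin n,
        MvPolynomial.eval x (wronskian' j g f) ≤ 0) ∧
    (ProperPosition f g → ∀ x : Fin n → ℝ, ∀ j : Fin n,
        0 ≤ MvPolynomial.eval x (wronskian' j g f)) := by
  refine ⟨⟨fun H => forward_dir f g H, ?_⟩, ?_, ?_⟩
  · rintro (⟨hf, hg⟩ | hp | hp)
    · intro a b hne
      exfalso
      apply hne
      rw [hf, hg]
      simp
    · exact stable_combo f g hp
    · intro a b hne
      have := stable_combo g f hp b a (by rwa [add_comm])
      rwa [add_comm] at this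
  · intro hp x j
    have h := wronskian_nonneg g f hp x j
    have e : wronskian' j f g = -wronskian' j g f := by
      rw [wronskian', wronskian']
      ring
    rw [e, map_neg] at h
    linarith
  · intro hp x j
    exact wronskian_nonneg f g hp x j
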